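/- Let B be a unital complex *-algebra equipped with an inner product, and let σ be an algebra automorphism of B with σ(σ(b*)*) = b for all b ∈ B. Suppose B admits an orthonormal (algebraic) basis (e_j)_{j∈J} as a ℂ-vector space and positive real numbers (λ_j)_{j∈J} such that σ(e_j) = λ_j·e_j for all j ∈ J. Then there exists a unique exponential one-parameter group β on B with β_i = σ, and it satisfies β_z(e_j) = λ_j^{−iz}·e_j for all j ∈ J and z ∈ ℂ. -/

import Mathlib

/-- A function `f : ℂ → ℂ` is of exponential type: it is entire and satisfies a bound
`|f z| ≤ M * exp (r * |Im z|)`. -/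
def ExpType (f : ℂ → ℂ) : Prop :=
  Differentiable ℂ f ∧
    ∃ M r : ℝ, 0 < M ∧ 0 < r ∧ ∀ z : ℂ, ‖f z‖ ≤ M * Real.exp (r * |z.im|)

/-- A function from `ℂ` into a complex vector space `V` is of finite exponential type if it is a
finite linear combination of functions of exponential type with coefficients in `V`. -/
def FinExpType {V : Type*} [AddCommGroup V] [Module ℂ V] (f : ℂ → V) : Prop :=
  ∃ (n : ℕ) (v : Fin n → V) (g : Fin n → ℂ → ℂ),
    (∀ j, ExpType (g j)) ∧ ∀ z : ℂ, f z = ∑ j, g j z • v j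

/-- A one-parameter group on a unital complex *-algebra `B`: a family of algebra automorphisms
`β z` with `β (y + z) = β y ∘ β z` and `star (β z b) = β (conj z) (star b)`. -/
def IsOneParamGroup {B : Type*} [Ring B] [Algebra ℂ B] [StarRing B] [StarModule ℂ B]
    (β : ℂ → (B ≃ₐ[ℂ] B)) : Prop :=
  (∀ y z : ℂ, ∀ b : B, β (y + z) b = β y (β z b)) ∧
    (∀ z : ℂ, ∀ b : B, star (β z b) = β (starRingEnd ℂ z) (star b))

/-- An exponential one-parameter group: a one-parameter group such that `z ↦ β z b` is of finite
exponential type for every `b`. -/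
def IsExpOneParamGroup {B : Type*} [Ring B] [Algebra ℂ B] [StarRing B] [StarModule ℂ B]
    (β : ℂ → (B ≃ₐ[ℂ] B)) : Prop :=
  IsOneParamGroup β ∧ ∀ b : B, FinExpType (fun z => β z b)


section Helpers

open Complex Filter Set
open scoped Topology

lemma expType_zero : ExpType (fun _ => (0 : ℂ)) := by
  refine ⟨differentiable_const _, 1, 1, one_pos, one_pos, fun z => ?_⟩
  simp
  positivity

lemma expType_const_mul {f : ℂ → ℂ} (hf : ExpType f) (c : ℂ) :
    ExpType fun z => c * f z := by
  obtain ⟨hd, M, r, hM, hr, hb⟩ := hf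
  refine ⟨hd.const_mul c, (‖c‖ + 1) * M, r, by positivity, hr, fun z => ?_⟩
  rw [norm_mul]
  calc ‖c‖ * ‖f z‖
      ≤ ‖c‖ * (M * Real.exp (r * |z.im|)) :=
        mul_le_mul_of_nonneg_left (hb z) (norm_nonneg c)
    _ = (‖c‖ * M) * Real.exp (r * |z.im|) := by ring
    _ ≤ ((‖c‖ + 1) * M) * Real.exp (r * |z.im|) := by
        gcongr
        linarith [norm_nonneg c]
    _ = (‖c‖ + 1) * M * Real.exp (r * |z.im|) := by ring

lemma expType_add {f g : ℂ → ℂ} (hf : ExpType f) (hg : ExpType g) :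
    ExpType fun z => f z + g z := by
  obtain ⟨hdf, M₁, r₁, hM₁, hr₁, hb₁⟩ := hf
  obtain ⟨hdg, M₂, r₂, hM₂, hr₂, hb₂⟩ := hg
  refine ⟨hdf.add hdg, M₁ + M₂, max r₁ r₂, by positivity, lt_max_of_lt_left hr₁, fun z => ?_⟩
  have h1 : ‖f z‖ ≤ M₁ * Real.exp (max r₁ r₂ * |z.im|) := by
    refine le_trans (hb₁ z) (mul_le_mul_of_nonneg_left (Real.exp_le_exp.2 ?_) (le_of_lt hM₁))
    exact mul_le_mul_of_nonneg_right (le_max_left _ _) (abs_nonneg _)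
  have h2 : ‖g z‖ ≤ M₂ * Real.exp (max r₁ r₂ * |z.im|) := by
    refine le_trans (hb₂ z) (mul_le_mul_of_nonneg_left (Real.exp_le_exp.2 ?_) (le_of_lt hM₂))
    exact mul_le_mul_of_nonneg_right (le_max_right _ _) (abs_nonneg _)
  calc ‖f z + g z‖ ≤ ‖f z‖ + ‖g z‖ := norm_add_le _ _
    _ ≤ M₁ * Real.exp (max r₁ r₂ * |z.im|) + M₂ * Real.exp (max r₁ r₂ * |z.im|) := by linarith
    _ = (M₁ + M₂) * Real.exp (max r₁ r₂ * |z.im|) := by ring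

lemma expType_neg {f : ℂ → ℂ} (hf : ExpType f) : ExpType fun z => -(f z) := by
  have := expType_const_mul hf (-1)
  simpa using this

lemma expType_sub {f g : ℂ → ℂ} (hf : ExpType f) (hg : ExpType g) :
    ExpType fun z => f z - g z := by
  have := expType_add hf (expType_neg hg)
  simpa [sub_eq_add_neg] using this

lemma expType_sum {ι : Type*} (s : Finset ι) (f : ι → ℂ → ℂ)
    (h : ∀ i ∈ s, ExpType (f i)) : ExpType fun z => ∑ i ∈ s, f i z := by
  classical
  induction s using Finset.cons_induction with
  | empty => simpa using expType_zero
  | cons a s ha ih =>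
    have h1 : ExpType fun z => f a z + ∑ i ∈ s, f i z :=
      expType_add (h a (Finset.mem_cons_self a s))
        (ih fun i hi => h i (Finset.mem_cons_of_mem hi))
    simpa [Finset.sum_insert ha] using h1

lemma expType_exp_im (x : ℝ) : ExpType fun z => Complex.exp (-(Complex.I * z) * (x : ℂ)) := by
  refine ⟨(((differentiable_const _).mul differentiable_id).neg.mul_const _).cexp,
    1, |x| + 1, one_pos, by positivity, fun z => ?_⟩
  rw [Complex.norm_exp, one_mul]
  have hre : (-(Complex.I * z) * (x : ℂ)).re = z.im * x := by
    simp [Complex.mul_re, Complex.mul_im]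
  rw [hre, Real.exp_le_exp]
  calc z.im * x ≤ |z.im * x| := le_abs_self _
    _ = |x| * |z.im| := by rw [abs_mul]; ring
    _ ≤ (|x| + 1) * |z.im| := by
        have := abs_nonneg z.im
        nlinarith


lemma blaschke_step {K : ℂ → ℂ} (hK : Differentiable ℂ K) {C : ℝ}
    (hb : ∀ z : ℂ, 0 ≤ z.im → ‖K z‖ ≤ C) {a : ℝ} (ha : 0 < a)
    (hz0 : K ((a : ℂ) * Complex.I) = 0) :
    ∀ z : ℂ, 0 ≤ z.im →
      ‖(z + (a : ℂ) * Complex.I) * dslope K ((a : ℂ) * Complex.I) z‖ ≤ C := by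
  have hC : 0 ≤ C := le_trans (norm_nonneg _) (hb 0 le_rfl)
  set p : ℂ := (a : ℂ) * Complex.I with hp
  have hpim : p.im = a := by simp [hp]
  have hpabs : ‖p‖ = a := by
    simp [hp, Complex.norm_real, abs_of_pos ha]
  have hdsl : Differentiable ℂ (dslope K p) := by
    rw [← differentiableOn_univ]
    exact (Complex.differentiableOn_dslope (Filter.univ_mem)).2 hK.differentiableOn
  set L : ℂ → ℂ := fun z => (z + p) * dslope K p z with hL
  have hLd : Differentiable ℂ L := (differentiable_id.add_const p).mul hdsl
  have hLval : ∀ z : ℂ, z ≠ p → L z = (z + p) * ((z - p)⁻¹ * K z) := by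
    intro z hz
    rw [hL]
    simp only [dslope_of_ne K hz, slope_def_field]
    rw [hz0, sub_zero]
    field_simp
  obtain ⟨C₁, hC₁⟩ := (isCompact_closedBall p (2 * a)).exists_bound_of_continuousOn
    hLd.continuous.continuousOn
  set C₃ : ℝ := max C₁ (2 * C) with hC₃
  have hglobal : ∀ z : ℂ, 0 ≤ z.im → ‖L z‖ ≤ C₃ := by
    intro z hz
    by_cases hzb : z ∈ Metric.closedBall p (2 * a)
    · exact le_trans (hC₁ z hzb) (le_max_left _ _)
    · have hd : 2 * a < ‖z - p‖ := by
        rw [Metric.mem_closedBall, not_le, Complex.dist_eq] at hzb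
        exact hzb
      have habs0 : 0 < ‖z - p‖ := lt_trans (by positivity) hd
      have hzp : z ≠ p := by
        intro h; rw [h] at habs0; simp at habs0
      have h1 : ‖z + p‖ ≤ 2 * ‖z - p‖ := by
        have h2 : z + p = (z - p) + 2 * p := by ring
        rw [h2]
        calc ‖(z - p) + 2 * p‖ ≤ ‖z - p‖ + ‖2 * p‖ :=
              norm_add_le _ _
          _ ≤ ‖z - p‖ + ‖z - p‖ := by
              simp only [norm_mul, hpabs, Complex.norm_two]; nlinarith
          _ = 2 * ‖z - p‖ := by ring
      rw [hLval z hzp, norm_mul, norm_mul, norm_inv]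
      calc ‖z + p‖ * ((‖z - p‖)⁻¹ * ‖K z‖)
          ≤ (2 * ‖z - p‖) * ((‖z - p‖)⁻¹ * C) := by
            have := hb z hz
            gcongr
        _ = 2 * C := by field_simp
        _ ≤ C₃ := le_max_right _ _
  -- boundary bound on the real axis
  have hbd : ∀ x : ℝ, ‖L x‖ ≤ C := by
    intro x
    have hxp : (x : ℂ) ≠ p := by
      intro h
      have := congrArg Complex.im h
      simp [hpim] at this
      exact absurd this.symm (ne_of_gt ha)
    have hconj : (starRingEnd ℂ) ((x : ℂ) - p) = (x : ℂ) + p := by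
      simp [hp, map_sub, Complex.conj_ofReal, map_mul, Complex.conj_I]
    have habs_eq : ‖(x : ℂ) + p‖ = ‖(x : ℂ) - p‖ := by
      rw [← hconj, Complex.norm_conj]
    have habs0 : ‖(x : ℂ) - p‖ ≠ 0 := by
      simp only [ne_eq, norm_eq_zero, sub_eq_zero]; exact hxp
    rw [hLval x hxp, norm_mul, norm_mul, norm_inv, habs_eq]
    have hsimp : ‖(x:ℂ) - p‖ * ((‖(x:ℂ) - p‖)⁻¹ * ‖K x‖)
        = ‖K x‖ := by field_simp
    rw [hsimp]
    exact hb x (by simp)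
  -- Phragmen-Lindelof on the right half plane, after rotating
  set f : ℂ → ℂ := fun w => L (Complex.I * w) with hf
  have hfd : Differentiable ℂ f := hLd.comp (differentiable_id.const_mul Complex.I)
  have him : ∀ w : ℂ, 0 ≤ w.re → 0 ≤ (Complex.I * w).im := by
    intro w hw; simp [Complex.mul_im]; exact hw
  have key : ∀ w : ℂ, 0 ≤ w.re → ‖f w‖ ≤ C := by
    intro w hw
    refine PhragmenLindelof.right_half_plane_of_bounded_on_real hfd.diffContOnCl
      ⟨1, one_lt_two, 0, ?_⟩ ?_ (fun x => ?_) hw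
    · refine Asymptotics.IsBigO.of_bound C₃ ?_
      refine eventually_inf_principal.2 (Eventually.of_forall fun z hz => ?_)
      have h0 : 0 ≤ (Complex.I * z).im := him z (le_of_lt hz)
      simp only [Real.norm_eq_abs]
      rw [zero_mul, Real.exp_zero, abs_one, mul_one]
      exact hglobal _ h0
    · refine isBoundedUnder_of_eventually_le (a := C₃) ?_
      filter_upwards [eventually_ge_atTop (0 : ℝ)] with x hx
      have : 0 ≤ ((Complex.I : ℂ) * (x : ℂ)).im := by simp [Complex.mul_im]; exact hx
      exact hglobal _ this
    · have hxI : Complex.I * ((x : ℂ) * Complex.I) = ((-x : ℝ) : ℂ) := by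
        push_cast; ring_nf; rw [Complex.I_sq]; ring
      simp only [hf, hxI]
      exact hbd (-x)
  intro z hz
  have hw : 0 ≤ (-(Complex.I * z)).re := by
    simp [Complex.mul_re]; exact hz
  have hwz : Complex.I * (-(Complex.I * z)) = z := by
    ring_nf; rw [Complex.I_sq]; ring
  have := key (-(Complex.I * z)) hw
  rw [hf] at this
  simp only [hwz] at this
  exact this



noncomputable def blaschkeSeq (G : ℂ → ℂ) : ℕ → ℂ → ℂ
  | 0 => G
  | N + 1 => fun z => (z + ((((N : ℝ) + 1) : ℝ) : ℂ) * Complex.I) *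
      dslope (blaschkeSeq G N) (((((N : ℝ) + 1) : ℝ) : ℂ) * Complex.I) z

lemma carlson_vanish {h : ℂ → ℂ} (hd : Differentiable ℂ h) {M r : ℝ}
    (hb : ∀ z : ℂ, ‖h z‖ ≤ M * Real.exp (r * |z.im|))
    (hz : ∀ n : ℤ, h ((n : ℂ) * Complex.I) = 0) : ∀ z : ℂ, h z = 0 := by
  have hM : 0 ≤ M := by
    have := hb 0
    simpa using le_trans (norm_nonneg _) this
  set r' : ℝ := |r| + 1 with hr'
  have hr'pos : 0 < r' := by positivity
  have hb' : ∀ z : ℂ, ‖h z‖ ≤ M * Real.exp (r' * |z.im|) := by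
    intro z
    refine le_trans (hb z) (mul_le_mul_of_nonneg_left (Real.exp_le_exp.2 ?_) hM)
    have : r ≤ r' := by rw [hr']; cases abs_cases r <;> linarith
    exact mul_le_mul_of_nonneg_right this (abs_nonneg _)
  set G : ℂ → ℂ := fun z => h z * Complex.exp (Complex.I * (r' : ℂ) * z) with hG
  have hGd : Differentiable ℂ G :=
    hd.mul ((differentiable_id.const_mul _).cexp)
  have habsG : ∀ z : ℂ, ‖G z‖ = ‖h z‖ * Real.exp (-r' * z.im) := by
    intro z
    rw [hG]
    simp only [norm_mul, Complex.norm_exp]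
    congr 2
    simp [Complex.mul_re, Complex.mul_im]
  have hGb : ∀ z : ℂ, 0 ≤ z.im → ‖G z‖ ≤ M := by
    intro z hzim
    rw [habsG]
    calc ‖h z‖ * Real.exp (-r' * z.im)
        ≤ (M * Real.exp (r' * |z.im|)) * Real.exp (-r' * z.im) :=
          mul_le_mul_of_nonneg_right (hb' z) (Real.exp_nonneg _)
      _ = M * Real.exp (r' * |z.im| + -r' * z.im) := by rw [mul_assoc, Real.exp_add]
      _ = M := by
          rw [_root_.abs_of_nonneg hzim]
          have h0 : r' * z.im + -r' * z.im = 0 := by ring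
          rw [h0, Real.exp_zero, mul_one]
  have hGz : ∀ n : ℤ, G ((n : ℂ) * Complex.I) = 0 := fun n => by
    rw [hG]; simp only [hz n, zero_mul]
  set H : ℕ → ℂ → ℂ := blaschkeSeq G with hH
  have hHd : ∀ N, Differentiable ℂ (H N) := by
    intro N
    induction N with
    | zero => exact hGd
    | succ N ih =>
      have : Differentiable ℂ (dslope (H N) (((((N : ℝ) + 1) : ℝ) : ℂ) * Complex.I)) := by
        rw [← differentiableOn_univ]
        exact (Complex.differentiableOn_dslope (Filter.univ_mem)).2 ih.differentiableOn
      exact (differentiable_id.add_const _).mul this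
  have hHz : ∀ N, ∀ m : ℕ, N < m → H N ((m : ℂ) * Complex.I) = 0 := by
    intro N
    induction N with
    | zero =>
      intro m _
      have := hGz (m : ℤ)
      simpa [hH, blaschkeSeq] using this
    | succ N ih =>
      intro m hm
      show (_ + _) * dslope (H N) _ _ = 0
      have hne : (m : ℂ) * Complex.I ≠ ((((N : ℝ) + 1) : ℝ) : ℂ) * Complex.I := by
        intro hEq
        have := congrArg Complex.im hEq
        simp at this
        have h3 : m = N + 1 := by exact_mod_cast this
        omega
      rw [dslope_of_ne _ hne, slope_def_field]
      have h1 : H N ((m : ℂ) * Complex.I) = 0 := ih m (by omega)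
      have h2 : H N (((((N : ℝ) + 1) : ℝ) : ℂ) * Complex.I) = 0 := by
        have := ih (N + 1) (by omega)
        have hcast : (((N + 1 : ℕ) : ℂ)) = ((((N : ℝ) + 1) : ℝ) : ℂ) := by push_cast; ring
        rwa [hcast] at this
      rw [h1, h2]
      simp
  have hHb : ∀ N, ∀ z : ℂ, 0 ≤ z.im → ‖H N z‖ ≤ M := by
    intro N
    induction N with
    | zero => exact hGb
    | succ N ih =>
      have ha : (0 : ℝ) < (N : ℝ) + 1 := by positivity
      have hz0 : H N (((((N : ℝ) + 1) : ℝ) : ℂ) * Complex.I) = 0 := by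
        have := hHz N (N + 1) (by omega)
        have hcast : (((N + 1 : ℕ) : ℂ)) = ((((N : ℝ) + 1) : ℝ) : ℂ) := by push_cast; ring
        rwa [hcast] at this
      exact blaschke_step (hHd N) ih ha hz0
  have hrel : ∀ N, ∀ z : ℂ, 0 < z.im → z.im < 1 →
      ‖G z‖ ≤ ‖H N z‖ * ∏ k ∈ Finset.range N,
        (‖z - ((((k : ℝ) + 1) : ℝ) : ℂ) * Complex.I‖ /
          ‖z + ((((k : ℝ) + 1) : ℝ) : ℂ) * Complex.I‖) := by
    intro N
    induction N with
    | zero => intro z _ _; simp [hH, blaschkeSeq]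
    | succ N ih =>
      intro z h0 h1
      set p : ℂ := ((((N : ℝ) + 1) : ℝ) : ℂ) * Complex.I with hpd
      have hne : z ≠ p := by
        intro hEq
        have := congrArg Complex.im hEq
        simp [hpd] at this
        have : (1:ℝ) ≤ z.im := by
          rw [this]
          have : (0:ℝ) ≤ (N:ℝ) := Nat.cast_nonneg N
          linarith
        linarith
      have hz1 : z - p ≠ 0 := sub_ne_zero.2 hne
      have hz2 : z + p ≠ 0 := by
        intro hEq
        have := congrArg Complex.im hEq
        simp [hpd] at this
        have h3 : (0:ℝ) ≤ (N:ℝ) := Nat.cast_nonneg N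
        linarith
      have hHpt : H N p = 0 := by
        have := hHz N (N + 1) (by omega)
        have hcast : (((N + 1 : ℕ) : ℂ)) = ((((N : ℝ) + 1) : ℝ) : ℂ) := by push_cast; ring
        rwa [hcast] at this
      have hdefn : H (N + 1) z = (z + p) * ((H N z - H N p) / (z - p)) := by
        show (z + p) * dslope (H N) p z = _
        rw [dslope_of_ne _ hne, slope_def_field]
      rw [hHpt, sub_zero] at hdefn
      have hform : H N z = H (N + 1) z * (z - p) / (z + p) := by
        rw [hdefn]; field_simp
      calc ‖G z‖
          ≤ ‖H N z‖ * ∏ k ∈ Finset.range N,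
            (‖z - ((((k : ℝ) + 1) : ℝ) : ℂ) * Complex.I‖ /
              ‖z + ((((k : ℝ) + 1) : ℝ) : ℂ) * Complex.I‖) := ih z h0 h1
        _ = (‖H (N + 1) z‖ * (‖z - p‖ / ‖z + p‖)) *
            ∏ k ∈ Finset.range N,
            (‖z - ((((k : ℝ) + 1) : ℝ) : ℂ) * Complex.I‖ /
              ‖z + ((((k : ℝ) + 1) : ℝ) : ℂ) * Complex.I‖) := by
            have habsform : ‖H N z‖
                = ‖H (N + 1) z‖ * (‖z - p‖ / ‖z + p‖) := by
              rw [hform, norm_div, norm_mul, mul_div_assoc]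
            rw [habsform]
        _ = ‖H (N + 1) z‖ * ∏ k ∈ Finset.range (N + 1),
            (‖z - ((((k : ℝ) + 1) : ℝ) : ℂ) * Complex.I‖ /
              ‖z + ((((k : ℝ) + 1) : ℝ) : ℂ) * Complex.I‖) := by
            rw [Finset.prod_range_succ]; ring
  -- vanishing at the points t * I for t ∈ (0,1)
  have hGpt : ∀ t : ℝ, 0 < t → t < 1 → G ((t : ℂ) * Complex.I) = 0 := by
    intro t ht0 ht1
    set z : ℂ := (t : ℂ) * Complex.I with hzd
    have hzim : z.im = t := by simp [hzd]
    have hbound : ∀ N : ℕ, ‖G z‖ ≤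
        M * Real.exp (-t * ∑ k ∈ Finset.range N, (1 / ((k : ℝ) + 1))) := by
      intro N
      have hprod1 : ∀ k : ℕ, k ∈ Finset.range N →
          ‖z - ((((k : ℝ) + 1) : ℝ) : ℂ) * Complex.I‖ /
            ‖z + ((((k : ℝ) + 1) : ℝ) : ℂ) * Complex.I‖
          ≤ Real.exp (-(t / ((k : ℝ) + 1))) := by
        intro k _
        set u : ℝ := (k : ℝ) + 1 with hud
        have hu : (1:ℝ) ≤ u := by
          have : (0:ℝ) ≤ (k:ℝ) := Nat.cast_nonneg k
          rw [hud]; linarith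
        have hnum : z - ((u : ℝ) : ℂ) * Complex.I = (((t - u) : ℝ) : ℂ) * Complex.I := by
          rw [hzd]; push_cast; ring
        have hden : z + ((u : ℝ) : ℂ) * Complex.I = (((t + u) : ℝ) : ℂ) * Complex.I := by
          rw [hzd]; push_cast; ring
        have habs1 : ‖z - ((u : ℝ) : ℂ) * Complex.I‖ = u - t := by
          rw [hnum, norm_mul, Complex.norm_I, mul_one, Complex.norm_real, Real.norm_eq_abs,
            _root_.abs_of_nonpos (by linarith)]
          ring
        have habs2 : ‖z + ((u : ℝ) : ℂ) * Complex.I‖ = t + u := by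
          rw [hden, norm_mul, Complex.norm_I, mul_one, Complex.norm_real, Real.norm_eq_abs,
            _root_.abs_of_nonneg (by linarith)]
        rw [habs1, habs2]
        have hupos : (0:ℝ) < u := by linarith
        have hutpos : (0:ℝ) < t + u := by linarith
        have hexp := Real.add_one_le_exp (-(t / u))
        have h4 : (1 - t / u) * (t + u) = (t + u) - (t * (t+u)) / u := by field_simp
        have h5 : t ^ 2 / u ≤ t := by
          rw [div_le_iff₀ hupos]; nlinarith
        have h6 : u - t ≤ (1 - t / u) * (t + u) := by
          rw [h4]
          have : (t * (t + u)) / u = t ^ 2 / u + t := by field_simp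
          rw [this]
          linarith
        rw [div_le_iff₀ hutpos]
        calc u - t ≤ (1 - t / u) * (t + u) := h6
          _ ≤ Real.exp (-(t / u)) * (t + u) :=
            mul_le_mul_of_nonneg_right (by linarith) (le_of_lt hutpos)
      have hprodle : (∏ k ∈ Finset.range N,
          (‖z - ((((k : ℝ) + 1) : ℝ) : ℂ) * Complex.I‖ /
            ‖z + ((((k : ℝ) + 1) : ℝ) : ℂ) * Complex.I‖))
          ≤ ∏ k ∈ Finset.range N, Real.exp (-(t / ((k : ℝ) + 1))) := by
        refine Finset.prod_le_prod (fun k _ => by positivity) hprod1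
      have hprodexp : (∏ k ∈ Finset.range N, Real.exp (-(t / ((k : ℝ) + 1))))
          = Real.exp (-t * ∑ k ∈ Finset.range N, (1 / ((k : ℝ) + 1))) := by
        rw [← Real.exp_sum]
        congr 1
        rw [Finset.mul_sum]
        refine Finset.sum_congr rfl fun k _ => by ring
      calc ‖G z‖
          ≤ ‖H N z‖ * ∏ k ∈ Finset.range N,
            (‖z - ((((k : ℝ) + 1) : ℝ) : ℂ) * Complex.I‖ /
              ‖z + ((((k : ℝ) + 1) : ℝ) : ℂ) * Complex.I‖) :=
            hrel N z (by rw [hzim]; exact ht0) (by rw [hzim]; exact ht1)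
        _ ≤ M * ∏ k ∈ Finset.range N,
            (‖z - ((((k : ℝ) + 1) : ℝ) : ℂ) * Complex.I‖ /
              ‖z + ((((k : ℝ) + 1) : ℝ) : ℂ) * Complex.I‖) := by
            refine mul_le_mul_of_nonneg_right (hHb N z ?_) ?_
            · rw [hzim]; exact le_of_lt ht0
            · exact Finset.prod_nonneg fun k _ => by positivity
        _ ≤ M * Real.exp (-t * ∑ k ∈ Finset.range N, (1 / ((k : ℝ) + 1))) := by
            exact mul_le_mul_of_nonneg_left (le_trans hprodle (le_of_eq hprodexp)) hM
    have hS := Real.tendsto_sum_range_one_div_nat_succ_atTop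
    have h1 : Tendsto (fun N : ℕ => -t * ∑ k ∈ Finset.range N, (1 / ((k : ℝ) + 1)))
        atTop atBot := (tendsto_const_mul_atBot_of_neg (by linarith)).2 hS
    have h2 : Tendsto (fun N : ℕ =>
        M * Real.exp (-t * ∑ k ∈ Finset.range N, (1 / ((k : ℝ) + 1)))) atTop (𝓝 0) := by
      have h3 := (Real.tendsto_exp_atBot.comp h1).const_mul M
      simpa using h3
    have hle : ‖G z‖ ≤ 0 := ge_of_tendsto' h2 hbound
    have : ‖G z‖ = 0 := le_antisymm hle (norm_nonneg _)
    exact norm_eq_zero.1 this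
  -- identity theorem
  have han : AnalyticOnNhd ℂ G Set.univ := analyticOnNhd_univ_iff_differentiable.2 hGd
  set z₀ : ℂ := (((1:ℝ)/2 : ℝ) : ℂ) * Complex.I with hz₀
  set x : ℕ → ℂ := fun n => ((((1:ℝ)/2 + 1/((n:ℝ)+3)) : ℝ) : ℂ) * Complex.I with hx
  have htt : Tendsto (fun n : ℕ => ((1:ℝ)/2 + 1/((n:ℝ)+3))) atTop (𝓝 ((1:ℝ)/2)) := by
    have hsh : Tendsto (fun n : ℕ => ((n:ℝ)+3)) atTop atTop :=
      tendsto_atTop_add_const_right _ 3 tendsto_natCast_atTop_atTop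
    have hinv : Tendsto (fun n : ℕ => ((n:ℝ)+3)⁻¹) atTop (𝓝 0) := hsh.inv_tendsto_atTop
    have := tendsto_const_nhds (x := ((1:ℝ)/2)) (f := (atTop : Filter ℕ)) |>.add hinv
    simpa [one_div] using this
  have hxz : Tendsto x atTop (𝓝[≠] z₀) := by
    refine tendsto_nhdsWithin_of_tendsto_nhds_of_eventually_within _ ?_ ?_
    · have h4 : Tendsto (fun n : ℕ => ((((1:ℝ)/2 + 1/((n:ℝ)+3)) : ℝ) : ℂ)) atTop
          (𝓝 (((1:ℝ)/2 : ℝ) : ℂ)) := (Complex.continuous_ofReal.tendsto _).comp htt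
      exact h4.mul_const Complex.I
    · refine Eventually.of_forall fun n => ?_
      simp only [Set.mem_compl_iff, Set.mem_singleton_iff]
      intro hEq
      have h5 := congrArg Complex.im hEq
      simp [hx, hz₀] at h5
      have h8 : (0:ℝ) ≤ (n:ℝ) := Nat.cast_nonneg n
      rcases h5 with h5' | h5' <;>
      · have h9 : ((n:ℝ)) + 3 = 0 := by exact_mod_cast h5'
        linarith
  have hfreq : ∃ᶠ w in 𝓝[≠] z₀, G w = 0 := by
    refine hxz.frequently (Frequently.of_forall fun n => ?_)
    have h6 : (0:ℝ) < (1:ℝ)/2 + 1/((n:ℝ)+3) := by positivity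
    have h7 : (1:ℝ)/2 + 1/((n:ℝ)+3) < 1 := by
      have h8 : (0:ℝ) ≤ (n:ℝ) := Nat.cast_nonneg n
      have h9 : 1/((n:ℝ)+3) ≤ 1/3 := by
        rw [div_le_div_iff₀ (by linarith) (by norm_num)]
        linarith
      linarith
    exact hGpt _ h6 h7
  have hG0 : Set.EqOn G 0 Set.univ :=
    han.eqOn_zero_of_preconnected_of_frequently_eq_zero isPreconnected_univ
      (Set.mem_univ z₀) hfreq
  intro z
  have h10 : G z = 0 := hG0 (Set.mem_univ z)
  rw [hG] at h10
  rcases mul_eq_zero.1 h10 with h | h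
  · exact h
  · exact absurd h (Complex.exp_ne_zero _)

end Helpers

open scoped ComplexOrder Classical

/-- Theorem 7.8 of the paper: let `B` be a unital complex *-algebra equipped with an inner
product `ip`, and let `σ` be an algebra automorphism with `σ (σ (b*)*) = b` that is diagonalised
with positive eigenvalues `λ_j` by an orthonormal basis `(e_j)`. Then there is a unique
exponential one-parameter group `β` on `B` with `β_i = σ`, and it satisfies
`β_z (e_j) = λ_j ^ (-iz) • e_j`. -/
theorem exists_unique_exp_one_param_group_of_positive_twist
    {B : Type*} [Ring B] [Algebra ℂ B] [StarRing B] [StarModule ℂ B]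
    (ip : B → B → ℂ)
    (ip_add : ∀ x y z : B, ip (x + y) z = ip x z + ip y z)
    (ip_smul : ∀ (c : ℂ) (x y : B), ip (c • x) y = c * ip x y)
    (ip_conj : ∀ x y : B, ip y x = starRingEnd ℂ (ip x y))
    (ip_pos : ∀ x : B, x ≠ 0 → 0 < ip x x)
    (σ : B ≃ₐ[ℂ] B) (hσ : ∀ b : B, σ (star (σ (star b))) = b)
    {J : Type*} (e : Module.Basis J ℂ B)
    (hON : ∀ j k : J, ip (e j) (e k) = (if j = k then 1 else 0))
    (lam : J → ℝ) (hlam : ∀ j, 0 < lam j)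
    (heig : ∀ j, σ (e j) = (lam j : ℂ) • e j) :
    ∃ β : ℂ → (B ≃ₐ[ℂ] B),
      (IsExpOneParamGroup β ∧ ∀ b : B, β Complex.I b = σ b) ∧
      (∀ γ : ℂ → (B ≃ₐ[ℂ] B),
        (IsExpOneParamGroup γ ∧ ∀ b : B, γ Complex.I b = σ b) → γ = β) ∧
      (∀ (j : J) (z : ℂ),
        β z (e j) = Complex.exp (-(Complex.I * z) * (Real.log (lam j) : ℂ)) • e j) := by
  classical
  set d : J → ℂ → ℂ := fun j z => Complex.exp (-(Complex.I * z) * (Real.log (lam j) : ℂ))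
    with hdd
  have hd_add : ∀ j y z, d j (y + z) = d j y * d j z := by
    intro j y z
    simp only [hdd, ← Complex.exp_add]
    congr 1
    ring
  have hd_zero : ∀ j, d j 0 = 1 := by intro j; simp [hdd]
  have hd_I : ∀ j, d j Complex.I = ((lam j : ℝ) : ℂ) := by
    intro j
    simp only [hdd]
    rw [show -(Complex.I * Complex.I) * (Real.log (lam j) : ℂ)
        = ((Real.log (lam j) : ℝ) : ℂ) by rw [Complex.I_mul_I]; ring]
    rw [← Complex.ofReal_exp, Real.exp_log (hlam j)]
  have hd_negI : ∀ j, d j (-Complex.I) = (((lam j)⁻¹ : ℝ) : ℂ) := by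
    intro j
    simp only [hdd]
    rw [show -(Complex.I * -Complex.I) * (Real.log (lam j) : ℂ)
        = ((-Real.log (lam j) : ℝ) : ℂ) by
      rw [show Complex.I * -Complex.I = -(Complex.I * Complex.I) by ring, Complex.I_mul_I]
      push_cast; ring]
    rw [← Complex.ofReal_exp, Real.exp_neg, Real.exp_log (hlam j)]
  -- the linear maps
  set L : ℂ → (B →ₗ[ℂ] B) := fun z => e.constr ℂ (fun j => d j z • e j) with hLL
  have hLb : ∀ z j, L z (e j) = d j z • e j := by
    intro z j
    simp only [hLL]
    exact e.constr_basis ℂ _ j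
  -- coordinates
  have hrepr_L : ∀ z b l, e.repr (L z b) l = d l z * e.repr b l := by
    intro z b l
    have hmaps : (e.coord l).comp (L z) = d l z • e.coord l := by
      refine e.ext fun j => ?_
      simp only [LinearMap.comp_apply, LinearMap.smul_apply, hLb, map_smul,
        Module.Basis.coord_apply, Module.Basis.repr_self, smul_eq_mul]
      by_cases hjl : j = l
      · subst hjl; simp
      · simp [Finsupp.single_apply, hjl]
    have := LinearMap.congr_fun hmaps b
    simpa [Module.Basis.coord_apply, smul_eq_mul] using this
  have hrepr_σ : ∀ (b : B) (l : J), e.repr (σ b) l = lam l * e.repr b l := by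
    intro b l
    have hmaps : (e.coord l).comp σ.toLinearMap = ((lam l : ℝ) : ℂ) • e.coord l := by
      refine e.ext fun j => ?_
      simp only [LinearMap.comp_apply, AlgEquiv.toLinearMap_apply, LinearMap.smul_apply,
        heig j, map_smul, Module.Basis.coord_apply, Module.Basis.repr_self, smul_eq_mul]
      by_cases hjl : j = l
      · subst hjl; simp
      · simp [Finsupp.single_apply, hjl]
    have h1 := LinearMap.congr_fun hmaps b
    simpa [Module.Basis.coord_apply, smul_eq_mul] using h1
  have hext : ∀ {x y : B}, (∀ l, e.repr x l = e.repr y l) → x = y := by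
    intro x y h
    exact e.ext_elem_iff.2 h
  have heig_supp : ∀ (μ : ℝ) (b : B), σ b = ((μ : ℝ) : ℂ) • b →
      ∀ l, e.repr b l ≠ 0 → lam l = μ := by
    intro μ b hb l hl
    have h1 : e.repr (σ b) l = lam l * e.repr b l := hrepr_σ b l
    have h2 : e.repr (σ b) l = ((μ : ℝ) : ℂ) * e.repr b l := by
      rw [hb, map_smul]
      simp [smul_eq_mul]
    have h3 : ((lam l : ℝ) : ℂ) = ((μ : ℝ) : ℂ) := by
      have := h1.symm.trans h2
      exact mul_right_cancel₀ hl this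
    exact_mod_cast h3
  have hσmul : ∀ j k, σ (e j * e k) = (((lam j * lam k : ℝ)) : ℂ) • (e j * e k) := by
    intro j k
    rw [map_mul, heig j, heig k, smul_mul_smul_comm]
    norm_cast
  have hmul_basis : ∀ z j k, L z (e j * e k) = L z (e j) * L z (e k) := by
    intro z j k
    rw [hLb, hLb, smul_mul_smul_comm]
    refine hext fun l => ?_
    rw [hrepr_L]
    simp only [map_smul, Finsupp.smul_apply, smul_eq_mul]
    by_cases h0 : e.repr (e j * e k) l = 0
    · rw [h0]; try ring
    · have hll : lam l = lam j * lam k := heig_supp _ _ (hσmul j k) l h0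
      have hdl : d l z = d j z * d k z := by
        simp only [hdd]
        rw [hll, Real.log_mul (ne_of_gt (hlam j)) (ne_of_gt (hlam k))]
        push_cast
        rw [← Complex.exp_add]
        congr 1
        ring
      rw [hdl]; try ring
  have hone : ∀ z, L z (1 : B) = 1 := by
    intro z
    refine hext fun l => ?_
    rw [hrepr_L]
    by_cases h0 : e.repr (1 : B) l = 0
    · rw [h0]; try ring
    · have hll : lam l = 1 := by
        refine heig_supp 1 1 ?_ l h0
        simp
      have hdl : d l z = 1 := by
        simp only [hdd]
        rw [hll, Real.log_one]
        simp
      simp [hdl]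
  have hmul : ∀ z (x y : B), L z (x * y) = L z x * L z y := by
    intro z x y
    have key : (LinearMap.mul ℂ B).compr₂ (L z)
        = (LinearMap.mul ℂ B).compl₁₂ (L z) (L z) := by
      refine e.ext fun j => ?_
      refine e.ext fun k => ?_
      simp only [LinearMap.compr₂_apply, LinearMap.compl₁₂_apply, LinearMap.mul_apply']
      exact hmul_basis z j k
    have h1 := LinearMap.congr_fun (LinearMap.congr_fun key x) y
    simpa using h1
  have hcompL : ∀ y z, (L y).comp (L z) = L (y + z) := by
    intro y z
    refine e.ext fun j => ?_
    simp only [LinearMap.comp_apply, hLb, map_smul]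
    rw [smul_smul, hd_add, mul_comm (d j y)]
  have hL0 : L 0 = LinearMap.id := by
    refine e.ext fun j => ?_
    simp [hLb, hd_zero]
  have hsymm_basis : ∀ j, σ.symm (e j) = (((lam j)⁻¹ : ℝ) : ℂ) • e j := by
    intro j
    apply σ.injective
    rw [AlgEquiv.apply_symm_apply, map_smul, heig, smul_smul]
    rw [show ((((lam j)⁻¹ : ℝ)) : ℂ) * ((lam j : ℝ) : ℂ) = 1 by
      rw [← Complex.ofReal_mul, inv_mul_cancel₀ (ne_of_gt (hlam j)), Complex.ofReal_one]]
    rw [one_smul]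
  have hstar_σ : ∀ (b : B), star (σ (star b)) = σ.symm b := by
    intro b
    apply σ.injective
    rw [hσ b, AlgEquiv.apply_symm_apply]
  have hσ_star_basis : ∀ j, σ (star (e j)) = (((lam j)⁻¹ : ℝ) : ℂ) • star (e j) := by
    intro j
    have h1 := hstar_σ (e j)
    have h2 : σ (star (e j)) = star (σ.symm (e j)) := by
      rw [← h1, star_star]
    rw [h2, hsymm_basis, star_smul]
    congr 1
    simp [Complex.star_def, Complex.conj_ofReal]
  have hstar_L_basis : ∀ z j,
      L (starRingEnd ℂ z) (star (e j)) = starRingEnd ℂ (d j z) • star (e j) := by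
    intro z j
    refine hext fun l => ?_
    rw [hrepr_L]
    simp only [map_smul, Finsupp.smul_apply, smul_eq_mul]
    by_cases h0 : e.repr (star (e j)) l = 0
    · rw [h0]; try ring
    · have hll : lam l = (lam j)⁻¹ := heig_supp _ _ (hσ_star_basis j) l h0
      have hdl : d l (starRingEnd ℂ z) = starRingEnd ℂ (d j z) := by
        simp only [hdd]
        rw [← Complex.exp_conj]
        congr 1
        rw [hll, Real.log_inv]
        push_cast
        simp only [map_mul, map_neg, Complex.conj_I, Complex.conj_ofReal]
        ring
      rw [hdl]
  have hstar_L : ∀ z (b : B), star (L z b) = L (starRingEnd ℂ z) (star b) := by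
    intro z b
    have hLHS : star (L z b) = ∑ j ∈ (e.repr b).support,
        (starRingEnd ℂ (e.repr b j * d j z)) • star (e j) := by
      conv_lhs => rw [← e.linearCombination_repr b, Finsupp.linearCombination_apply,
        Finsupp.sum]
      rw [map_sum, star_sum]
      refine Finset.sum_congr rfl fun j _ => ?_
      rw [map_smul, hLb, smul_smul, star_smul]
      rfl
    have hRHS : L (starRingEnd ℂ z) (star b) = ∑ j ∈ (e.repr b).support,
        (starRingEnd ℂ (e.repr b j * d j z)) • star (e j) := by
      conv_lhs => rw [← e.linearCombination_repr b, Finsupp.linearCombination_apply,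
        Finsupp.sum]
      rw [star_sum, map_sum]
      refine Finset.sum_congr rfl fun j _ => ?_
      rw [star_smul, map_smul, hstar_L_basis, smul_smul, map_mul]
      rfl
    rw [hLHS, hRHS]
  -- assemble the algebra equivalences
  set β : ℂ → (B ≃ₐ[ℂ] B) := fun z => AlgEquiv.ofLinearEquiv
      (LinearEquiv.ofLinear (L z) (L (-z))
        (by rw [hcompL, add_neg_cancel, hL0])
        (by rw [hcompL, neg_add_cancel, hL0]))
      (hone z) (hmul z) with hβdef
  have hβ : ∀ z b, β z b = L z b := fun z b => rfl
  have hβI : ∀ b, β Complex.I b = σ b := by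
    intro b
    have h1 : L Complex.I = σ.toLinearMap := by
      refine e.ext fun j => ?_
      rw [hLb, hd_I]
      simp [heig j]
    rw [hβ, h1]
    rfl
  have hgrpβ : ∀ y z (b : B), β (y + z) b = β y (β z b) := by
    intro y z b
    rw [hβ, hβ, hβ, ← hcompL]
    rfl
  refine ⟨β, ⟨⟨⟨hgrpβ, ?_⟩, ?_⟩, hβI⟩, ?_, ?_⟩
  · -- star condition
    intro z b
    rw [hβ, hβ]
    exact hstar_L z b
  · -- finite exponential type
    intro b
    set s : Finset J := (e.repr b).support with hs
    set n : ℕ := Fintype.card ↥s with hn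
    set Eq : ↥s ≃ Fin n := Fintype.equivFin ↥s with hEq
    refine ⟨n, fun t => e ((Eq.symm t) : J),
      fun t z => e.repr b ((Eq.symm t) : J) * d ((Eq.symm t) : J) z, fun t => ?_, fun z => ?_⟩
    · have h1 := expType_const_mul (expType_exp_im (Real.log (lam ((Eq.symm t) : J))))
        (e.repr b ((Eq.symm t) : J))
      simpa [hdd] using h1
    · show β z b = _
      rw [hβ]
      have h1 : L z b = ∑ j ∈ s, (e.repr b j * d j z) • e j := by
        conv_lhs => rw [← e.linearCombination_repr b, Finsupp.linearCombination_apply,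
          Finsupp.sum]
        rw [map_sum]
        refine Finset.sum_congr rfl fun j _ => ?_
        rw [map_smul, hLb, smul_smul]
      rw [h1]
      rw [← Finset.sum_coe_sort s (fun j => (e.repr b j * d j z) • e j)]
      exact (Equiv.sum_comp Eq.symm fun x : ↥s => (e.repr b (x : J) * d (x : J) z) • e (x : J)).symm
  · -- uniqueness
    rintro γ ⟨⟨⟨hgrp, _hstar⟩, hfin⟩, hI⟩
    have hγ0 : ∀ b : B, γ 0 b = b := by
      intro b
      have h1 : γ (0 + 0) b = γ 0 (γ 0 b) := hgrp 0 0 b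
      rw [add_zero] at h1
      exact ((γ 0).injective h1).symm
    have hβ0 : ∀ b : B, β 0 b = b := by
      intro b
      rw [hβ, hL0]
      rfl
    have hγnegI : ∀ j, γ (-Complex.I) (e j) = (((lam j)⁻¹ : ℝ) : ℂ) • e j := by
      intro j
      have h1 : γ (Complex.I + -Complex.I) (e j) = γ Complex.I (γ (-Complex.I) (e j)) :=
        hgrp _ _ _
      rw [add_neg_cancel, hγ0, hI] at h1
      have h2 : γ (-Complex.I) (e j) = σ.symm (e j) := by
        apply σ.injective
        rw [AlgEquiv.apply_symm_apply]
        exact h1.symm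
      rw [h2, hsymm_basis]
    have hβI' : ∀ j, β Complex.I (e j) = ((lam j : ℝ) : ℂ) • e j := by
      intro j
      rw [hβ, hLb, hd_I]
    have hβnegI : ∀ j, β (-Complex.I) (e j) = (((lam j)⁻¹ : ℝ) : ℂ) • e j := by
      intro j
      rw [hβ, hLb, hd_negI]
    have hint : ∀ (j : J) (nn : ℤ),
        γ ((nn : ℂ) * Complex.I) (e j) = β ((nn : ℂ) * Complex.I) (e j) := by
      intro j nn
      induction nn using Int.induction_on with
      | zero => push_cast; rw [zero_mul, hγ0, hβ0]
      | succ n ih =>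
        have hcast : (((n : ℤ) + 1 : ℤ) : ℂ) * Complex.I
            = (n : ℂ) * Complex.I + Complex.I := by push_cast; ring
        push_cast
        push_cast at hcast ih
        rw [hcast, hgrp, hgrpβ, hI, hβI' j, heig j, map_smul, map_smul, ih]
      | pred n ih =>
        have hcast : ((-(n : ℤ) - 1 : ℤ) : ℂ) * Complex.I
            = (-(n : ℤ) : ℂ) * Complex.I + -Complex.I := by push_cast; ring
        push_cast
        push_cast at hcast ih
        rw [hcast, hgrp, hgrpβ, hγnegI j, hβnegI j, map_smul, map_smul, ih]
    have hbasis_eq : ∀ (z : ℂ) (j : J), γ z (e j) = β z (e j) := by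
      intro z j
      obtain ⟨m, v, g, hg, hsum⟩ := hfin (e j)
      refine hext fun k => ?_
      set F : ℂ → ℂ := fun w =>
        (∑ t : Fin m, e.repr (v t) k * g t w) - e.repr (e j) k * d k w with hF
      have hFrepr : ∀ w, e.repr (γ w (e j)) k = ∑ t : Fin m, e.repr (v t) k * g t w := by
        intro w
        rw [show γ w (e j) = ∑ t, g t w • v t from hsum w, map_sum]
        rw [Finsupp.finset_sum_apply]
        refine Finset.sum_congr rfl fun t _ => ?_
        rw [map_smul]
        simp [smul_eq_mul, mul_comm]
      have hFβ : ∀ w, e.repr (β w (e j)) k = e.repr (e j) k * d k w := by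
        intro w
        rw [hβ, hrepr_L, mul_comm]
      have hFexp : ExpType F := by
        refine expType_sub (expType_sum Finset.univ _ fun t _ =>
          expType_const_mul (hg t) _) ?_
        have h1 := expType_const_mul (expType_exp_im (Real.log (lam k))) (e.repr (e j) k)
        simpa [hdd] using h1
      obtain ⟨hFdiff, M, r, _hM, _hr, hFb⟩ := hFexp
      have hFzero : ∀ nn : ℤ, F ((nn : ℂ) * Complex.I) = 0 := by
        intro nn
        have h2 : e.repr (γ ((nn : ℂ) * Complex.I) (e j)) k
            = e.repr (β ((nn : ℂ) * Complex.I) (e j)) k := by rw [hint j nn]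
        rw [hFrepr, hFβ] at h2
        simp only [hF]
        rw [h2, sub_self]
      have hF0 := carlson_vanish hFdiff hFb hFzero z
      rw [hFrepr, hFβ]
      have h3 : (∑ t : Fin m, e.repr (v t) k * g t z) - e.repr (e j) k * d k z = 0 := hF0
      exact sub_eq_zero.1 h3
    funext z
    refine AlgEquiv.ext fun b => ?_
    have hlin : (γ z).toLinearMap = (β z).toLinearMap := by
      refine e.ext fun j => ?_
      simpa using hbasis_eq z j
    exact LinearMap.congr_fun hlin b
  · -- the formula
    intro j z
    rw [hβ, hLb]
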